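/- arXiv:1912.10138 — 8 statements merged into one kernel-verified Lean document; each statement's English description precedes it below -/
import Mathlib

section
/- Any set of k points in ℝⁿ (n ≥ 1) can be covered by a union of at most max{1, k-n+1} parallel hyperplanes. -/
open scoped RealInnerProductSpace

/-- `S` can be covered by at most `m` parallel hyperplanes: there is a common nonzero
normal vector `v` and at most `m` values `c` such that every point of `S` lies on one
of the hyperplanes `{x | ⟪v, x⟫ = c}`. -/
def CoveredByParallelHyperplanes {n : ℕ} (S : Set (EuclideanSpace ℝ (Fin n))) (m : ℕ) : Prop :=
  ∃ v : EuclideanSpace ℝ (Fin n), v ≠ 0 ∧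
    ∃ C : Finset ℝ, C.card ≤ m ∧ ∀ x ∈ S, ⟪v, x⟫ ∈ C

theorem stmt0 {n k : ℕ} (hn : 1 ≤ n) (S : Set (EuclideanSpace ℝ (Fin n)))
    (hS : S.Finite) (hcard : S.ncard = k) :
    CoveredByParallelHyperplanes S (max 1 (k - n + 1)) := by
  classical
  rcases S.eq_empty_or_nonempty with rfl | ⟨x₀, hx₀⟩
  · refine ⟨EuclideanSpace.single ⟨0, hn⟩ 1, ?_, ∅, by simp, by simp⟩
    intro h
    have := congrArg (fun w : EuclideanSpace ℝ (Fin n) => w ⟨0, hn⟩) h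
    simp [EuclideanSpace.single] at this
  · set F := hS.toFinset with hF
    have hFx₀ : x₀ ∈ F := hS.mem_toFinset.mpr hx₀
    have hFcard : F.card = k := by
      rw [← hcard, Set.ncard_eq_toFinset_card S hS]
    -- choose T ⊆ F.erase x₀ of size min (n-1) ((F.erase x₀).card)
    obtain ⟨T, hTsub, hTcard⟩ := Finset.exists_subset_card_eq
      (min_le_right (n - 1) ((F.erase x₀).card))
    have hx₀T : x₀ ∉ T := fun h => (Finset.mem_erase.mp (hTsub h)).1 rfl
    have hTn : T.card ≤ n - 1 := hTcard ▸ min_le_left _ _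
    -- the span of the differences
    set W : Submodule ℝ (EuclideanSpace ℝ (Fin n)) :=
      Submodule.span ℝ ((T.image (fun x => x - x₀) : Finset (EuclideanSpace ℝ (Fin n))) : Set _)
      with hW
    have hWfin : Module.finrank ℝ W ≤ n - 1 := by
      calc Module.finrank ℝ W ≤ (T.image (fun x => x - x₀)).card := by
            have := finrank_span_finset_le_card (R := ℝ) (T.image (fun x => x - x₀))
            rw [Set.finrank] at this
            exact this
        _ ≤ T.card := Finset.card_image_le
        _ ≤ n - 1 := hTn
    have hWne : W ≠ ⊤ := by
      intro h
      have : Module.finrank ℝ W = n := by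
        rw [h, finrank_top]; exact finrank_euclideanSpace_fin
      omega
    have hbot : Wᗮ ≠ ⊥ := by
      intro h
      exact hWne (Submodule.orthogonal_eq_bot_iff.mp h)
    obtain ⟨v, hvW, hv0⟩ := Submodule.exists_mem_ne_zero_of_ne_bot hbot
    have hvT : ∀ x ∈ T, ⟪v, x⟫ = ⟪v, x₀⟫ := by
      intro x hx
      have hmem : x - x₀ ∈ W := Submodule.subset_span (by
        simp only [Finset.coe_image, Set.mem_image]
        exact ⟨x, hx, rfl⟩)
      have : ⟪x - x₀, v⟫ = 0 := hvW (x - x₀) hmem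
      rw [inner_sub_left] at this
      have := sub_eq_zero.mp this
      linarith [real_inner_comm v x, real_inner_comm v x₀, this]
    refine ⟨v, hv0, insert ⟪v, x₀⟫ ((F \ insert x₀ T).image (fun x => ⟪v, x⟫)), ?_, ?_⟩
    · have hsub : insert x₀ T ⊆ F := by
        intro y hy
        rcases Finset.mem_insert.mp hy with rfl | hy
        · exact hFx₀
        · exact Finset.mem_of_mem_erase (hTsub hy)
      have hcard1 : (F \ insert x₀ T).card = k - (T.card + 1) := by
        rw [Finset.card_sdiff_of_subset hsub, Finset.card_insert_of_notMem hx₀T, hFcard]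
      have herase : (F.erase x₀).card = k - 1 := by
        rw [Finset.card_erase_of_mem hFx₀, hFcard]
      calc (insert ⟪v, x₀⟫ ((F \ insert x₀ T).image (fun x => ⟪v, x⟫))).card
          ≤ ((F \ insert x₀ T).image (fun x => ⟪v, x⟫)).card + 1 :=
            Finset.card_insert_le _ _
        _ ≤ (F \ insert x₀ T).card + 1 := by
            exact Nat.add_le_add_right Finset.card_image_le 1
        _ ≤ max 1 (k - n + 1) := by
            rw [hcard1]
            have hk1 : 1 ≤ k := by
              rw [← hFcard]; exact Finset.card_pos.mpr ⟨x₀, hFx₀⟩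
            have := hTcard
            rw [herase] at this
            omega
    · intro x hx
      have hxF : x ∈ F := hS.mem_toFinset.mpr hx
      by_cases hxi : x ∈ insert x₀ T
      · rcases Finset.mem_insert.mp hxi with rfl | hxT
        · exact Finset.mem_insert_self _ _
        · rw [hvT x hxT]; exact Finset.mem_insert_self _ _
      · exact Finset.mem_insert_of_mem
          (Finset.mem_image.mpr ⟨x, Finset.mem_sdiff.mpr ⟨hxF, hxi⟩, rfl⟩)
end

section
/- If S ⊆ Cₙ(T) = {x ∈ ℤⁿ : ‖x‖_∞ ≤ T} has cardinality k and cannot be covered by fewer than k-n+1 parallel hyperplanes, then k ≤ 2T+n. -/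
open scoped RealInnerProductSpace

/-- The integer cube `Cₙ(T) = {x ∈ ℤⁿ : ‖x‖_∞ ≤ T}`, viewed inside `ℝⁿ`. -/
def IntCube (n : ℕ) (T : ℕ) : Set (EuclideanSpace ℝ (Fin n)) :=
  {x | ∀ i : Fin n, (∃ m : ℤ, x i = (m : ℝ)) ∧ |x i| ≤ (T : ℝ)}

theorem stmt1 {n T k : ℕ} (hn : 1 ≤ n) (hT : 1 ≤ T)
    (S : Set (EuclideanSpace ℝ (Fin n))) (hS : S ⊆ IntCube n T)
    (hfin : S.Finite) (hcard : S.ncard = k)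
    (hcover : ¬ CoveredByParallelHyperplanes S (k - n)) :
    k ≤ 2 * T + n := by
  by_contra h
  push_neg at h
  apply hcover
  have hi : Fin n := ⟨0, hn⟩
  refine ⟨EuclideanSpace.single hi 1, ?_, Finset.image (Int.cast : ℤ → ℝ) (Finset.Icc (-(T:ℤ)) T), ?_, ?_⟩
  · intro hv
    have := congrArg (fun v => v hi) hv
    simp [EuclideanSpace.single_apply] at this
  · calc (Finset.image (Int.cast : ℤ → ℝ) (Finset.Icc (-(T:ℤ)) T)).card
        ≤ (Finset.Icc (-(T:ℤ)) T).card := Finset.card_image_le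
      _ = 2 * T + 1 := by rw [Int.card_Icc]; simp; omega
      _ ≤ k - n := by omega
  · intro x hx
    obtain ⟨⟨m, hm⟩, habs⟩ := hS hx hi
    have : ⟪EuclideanSpace.single hi (1:ℝ), x⟫ = x hi := by
      rw [EuclideanSpace.inner_single_left]; simp
    rw [this, hm]
    refine Finset.mem_image_of_mem _ ?_
    rw [hm] at habs
    rw [abs_le] at habs
    simp only [Finset.mem_Icc]
    constructor <;> [exact_mod_cast (show ((-(T:ℤ) : ℤ) : ℝ) ≤ ((m : ℤ) : ℝ) by push_cast; linarith [habs.1]); exact_mod_cast (show ((m : ℤ) : ℝ) ≤ (((T:ℤ) : ℤ) : ℝ) by push_cast; linarith [habs.2])]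
end

section
/- If S ⊆ Cₙ(T) has cardinality k < 2T+n, then S can be covered by at most 2T parallel hyperplanes. Equivalently, if 2T+1 parallel hyperplanes are required to cover S, then |S| ≥ 2T+n. -/
open scoped RealInnerProductSpace

theorem stmt2 {n T k : ℕ} (hn : 1 ≤ n) (hT : 1 ≤ T)
    (S : Set (EuclideanSpace ℝ (Fin n))) (hS : S ⊆ IntCube n T)
    (hfin : S.Finite) (hcard : S.ncard = k)
    (hk : k < 2 * T + n) :
    CoveredByParallelHyperplanes S (2 * T) := by
  classical
  set F : Finset (EuclideanSpace ℝ (Fin n)) := hfin.toFinset with hF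
  have hFcard : F.card = k := by
    rw [hF, ← Set.ncard_eq_toFinset_card S hfin]; exact hcard
  have hmemF : ∀ x ∈ S, x ∈ F := fun x hx => hfin.mem_toFinset.mpr hx
  by_cases hk2 : k ≤ 2 * T
  · -- trivial case: any nonzero vector works
    refine ⟨EuclideanSpace.single ⟨0, hn⟩ 1, ?_, F.image (fun x => ⟪EuclideanSpace.single ⟨0, hn⟩ 1, x⟫), ?_, ?_⟩
    · intro h
      have h0 : (EuclideanSpace.single (⟨0, hn⟩ : Fin n) (1 : ℝ)) ⟨0, hn⟩ = 0 := by
        rw [h]; rfl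
      simp [EuclideanSpace.single_apply] at h0
    · exact le_trans (Finset.card_image_le) (by omega)
    · intro x hx
      exact Finset.mem_image_of_mem _ (hmemF x hx)
  · -- main case: 2T < k < 2T + n
    push_neg at hk2
    set d : ℕ := k - 2 * T with hd
    have hd1 : 1 ≤ d := by omega
    have hdn : d < n := by omega
    have hdk : d + 1 ≤ F.card := by omega
    obtain ⟨F', hF'sub, hF'card⟩ := Finset.exists_subset_card_eq hdk
    obtain ⟨p, hp⟩ : F'.Nonempty := Finset.card_pos.mp (by omega)
    set G : Finset (EuclideanSpace ℝ (Fin n)) := F'.erase p with hG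
    have hGcard : G.card = d := by
      rw [hG, Finset.card_erase_of_mem hp, hF'card]; omega
    set W : Submodule ℝ (EuclideanSpace ℝ (Fin n)) :=
      Submodule.span ℝ ((G.image (fun x => x - p)) : Set (EuclideanSpace ℝ (Fin n))) with hW
    have hWrank : Module.finrank ℝ W < n := by
      calc Module.finrank ℝ W ≤ (G.image (fun x => x - p)).card :=
            finrank_span_finset_le_card _
        _ ≤ G.card := Finset.card_image_le
        _ = d := hGcard
        _ < n := hdn
    have hWne : W ≠ ⊤ := by
      intro htop
      rw [htop, finrank_top, finrank_euclideanSpace_fin] at hWrank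
      omega
    have hWorth : Wᗮ ≠ ⊥ := by
      intro hbot
      exact hWne (Submodule.orthogonal_eq_bot_iff.mp hbot)
    obtain ⟨v, hvW, hv0⟩ := Submodule.exists_mem_ne_zero_of_ne_bot hWorth
    -- inner products are constant on F'
    have hkey : ∀ x ∈ F', ⟪v, x⟫ = ⟪v, p⟫ := by
      intro x hx
      by_cases hxp : x = p
      · rw [hxp]
      · have hxG : x ∈ G := Finset.mem_erase.mpr ⟨hxp, hx⟩
        have hmem : x - p ∈ W := Submodule.subset_span (by
          exact_mod_cast Finset.mem_image_of_mem _ hxG)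
        have : ⟪x - p, v⟫ = 0 := (Submodule.mem_orthogonal W v).mp hvW _ hmem
        have h2 : ⟪v, x - p⟫ = 0 := by rwa [real_inner_comm] at this
        rw [inner_sub_right] at h2
        linarith
    refine ⟨v, hv0, (F \ G).image (fun x => ⟪v, x⟫), ?_, ?_⟩
    · have hGF : G ⊆ F := fun x hx => hF'sub (Finset.mem_of_mem_erase hx)
      calc ((F \ G).image (fun x => ⟪v, x⟫)).card ≤ (F \ G).card := Finset.card_image_le
        _ = F.card - G.card := Finset.card_sdiff_of_subset hGF
        _ = k - d := by rw [hFcard, hGcard]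
        _ = 2 * T := by omega
    · intro x hx
      have hxF : x ∈ F := hmemF x hx
      by_cases hxG : x ∈ G
      · have hpFG : p ∈ F \ G := Finset.mem_sdiff.mpr ⟨hF'sub hp, Finset.notMem_erase p F'⟩
        have : ⟪v, x⟫ = ⟪v, p⟫ := hkey x (Finset.mem_of_mem_erase hxG)
        rw [this]
        exact Finset.mem_image_of_mem _ hpFG
      · exact Finset.mem_image_of_mem _ (Finset.mem_sdiff.mpr ⟨hxF, hxG⟩)
end

section
/- For each n ≥ 1, the set Sₙ = {0, x₁, ..., x_{n+1}} ⊂ ℝⁿ, where xᵢ = -e_{n-i+1} + Σ_{j=n-i+2}^{n} e_j for 1 ≤ i ≤ n and x_{n+1} = (1,...,1), has cardinality n+2 and cannot be covered by two parallel hyperplanes. -/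
open scoped RealInnerProductSpace

/-- For `1 ≤ i ≤ n`, the vector `xᵢ = -e_{n-i+1} + Σ_{j=n-i+2}^n e_j`; for `i = n+1`
this gives the all-ones vector `(1,…,1)`.  (Coordinates are 0-indexed: coordinate `t`
is `0` if `t + i < n`, `-1` if `t + i = n`, and `1` if `t + i > n`.) -/
def xvec (n : ℕ) (i : ℕ) : EuclideanSpace ℝ (Fin n) := WithLp.toLp 2 fun t =>
  if (t : ℕ) + i < n then 0 else if (t : ℕ) + i = n then -1 else 1

/-- The set `Sₙ = {0, x₁, …, x_{n+1}}`. -/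
def Sset (n : ℕ) : Set (EuclideanSpace ℝ (Fin n)) :=
  {0} ∪ {y | ∃ i : ℕ, 1 ≤ i ∧ i ≤ n + 1 ∧ y = xvec n i}

-- auxiliary lemmas
lemma geom2 (t : ℕ) : ∑ k ∈ Finset.range t, (2:ℝ)^k = 2^t - 1 := by
  induction t with
  | zero => simp
  | succ t ih => rw [Finset.sum_range_succ, ih]; ring

lemma inner_xvec {n : ℕ} (v : EuclideanSpace ℝ (Fin n)) (j : ℕ) :
    ⟪v, xvec n j⟫ = ∑ t : Fin n, v t * xvec n j t := by
  simp [PiLp.inner_apply, mul_comm]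

lemma pert {n : ℕ} (t : Fin n) :
    ∑ k ∈ Finset.range n, (2:ℝ)^k * xvec n (n-k) t = -1 := by
  have ht := t.isLt
  have hterm : ∀ k ∈ Finset.range n, (2:ℝ)^k * xvec n (n-k) t
      = (if k ∈ Finset.range (t:ℕ) then (2:ℝ)^k else 0)
        + (if k = (t:ℕ) then -(2:ℝ)^(t:ℕ) else 0) := by
    intro k hk
    simp only [Finset.mem_range] at hk
    by_cases h1 : (t:ℕ) < k
    · have hc : (t:ℕ) + (n-k) < n := by omega
      have h2 : ¬ k < (t:ℕ) := by omega
      have h3 : k ≠ (t:ℕ) := by omega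
      simp [xvec, hc, h2, h3]
    · by_cases h2 : (t:ℕ) = k
      · have hc : ¬ ((t:ℕ) + (n-k) < n) := by omega
        have hc2 : (t:ℕ) + (n-k) = n := by omega
        have h3 : ¬ k < (t:ℕ) := by omega
        simp [xvec, hc, hc2, h3, h2.symm]
      · have hc : ¬ ((t:ℕ) + (n-k) < n) := by omega
        have hc2 : (t:ℕ) + (n-k) ≠ n := by omega
        have h3 : k < (t:ℕ) := by omega
        have h4 : k ≠ (t:ℕ) := by omega
        simp [xvec, hc, hc2, h3, h4]
  rw [Finset.sum_congr rfl hterm, Finset.sum_add_distrib, Finset.sum_ite_mem]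
  have hinter : Finset.range n ∩ Finset.range (t:ℕ) = Finset.range (t:ℕ) := by
    ext k; simp
  rw [hinter, geom2, Finset.sum_ite_eq' (Finset.range n) ((t:ℕ))]
  simp [ht]
  ring

lemma xlast {n : ℕ} (t : Fin n) : xvec n (n+1) t = 1 := by
  have ht := t.isLt
  have h1 : ¬ ((t:ℕ) + (n+1) < n) := by omega
  have h2 : (t:ℕ) + (n+1) ≠ n := by omega
  simp [xvec, h1, h2]

lemma keyid {n : ℕ} (v : EuclideanSpace ℝ (Fin n)) :
    ∑ k ∈ Finset.range n, (2:ℝ)^k * ⟪v, xvec n (n-k)⟫ + ⟪v, xvec n (n+1)⟫ = 0 := by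
  simp only [inner_xvec, Finset.mul_sum]
  rw [Finset.sum_comm, ← Finset.sum_add_distrib]
  apply Finset.sum_eq_zero
  intro t _
  have : ∑ k ∈ Finset.range n, (2:ℝ)^k * (v t * xvec n (n-k) t)
      = v t * ∑ k ∈ Finset.range n, (2:ℝ)^k * xvec n (n-k) t := by
    rw [Finset.mul_sum]; apply Finset.sum_congr rfl; intro k _; ring
  rw [this, pert t, xlast t]; ring

lemma vzero {n : ℕ} (v : EuclideanSpace ℝ (Fin n))
    (h : ∀ i, 1 ≤ i → i ≤ n → ⟪v, xvec n i⟫ = 0) : v = 0 := by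
  have key : ∀ d : ℕ, ∀ t : Fin n, n - d ≤ (t:ℕ) → v t = 0 := by
    intro d
    induction d with
    | zero => intro t ht; exact absurd t.isLt (by omega)
    | succ d ih =>
      intro t ht
      by_cases hc : n - d ≤ (t:ℕ)
      · exact ih t hc
      · have htv : (t:ℕ) = n - d - 1 := by omega
        have htlt := t.isLt
        have hd : d < n := by omega
        have hs := h (d+1) (by omega) (by omega)
        rw [inner_xvec] at hs
        have hterm : ∀ u : Fin n, u ∈ (Finset.univ : Finset (Fin n)) →
            v u * xvec n (d+1) u = if u = t then -v u else 0 := by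
          intro u _
          have hu := u.isLt
          by_cases h1 : (u:ℕ) + (d+1) < n
          · have hne : u ≠ t := by intro e; rw [e] at h1; omega
            simp [xvec, h1, hne]
          · by_cases h2 : (u:ℕ) + (d+1) = n
            · have heq : u = t := Fin.ext (by omega)
              have hx : xvec n (d+1) u = -1 := by
                show (if ((u:ℕ)+(d+1) < n) then (0:ℝ) else if (u:ℕ)+(d+1) = n then -1 else 1) = -1
                rw [if_neg h1, if_pos h2]
              rw [hx, if_pos heq]
              ring
            · have hu0 : v u = 0 := ih u (by omega)
              simp [hu0]
        rw [Finset.sum_congr rfl hterm, Finset.sum_ite_eq' Finset.univ t] at hs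
        simp at hs
        exact hs
  ext t
  exact key n t (by omega)

lemma xvec_ne {n : ℕ} (i j : ℕ) (h1 : 1 ≤ i) (hij : i < j) (hj : j ≤ n + 1) :
    xvec n i ≠ xvec n j := by
  intro h
  have hn : 1 ≤ n := by omega
  have hi : i ≤ n := by omega
  have htlt : n - i < n := by omega
  have := congrArg (fun w => w ⟨n - i, htlt⟩) h
  have hc1 : ¬ (n - i + i < n) := by omega
  have hc2 : n - i + i = n := by omega
  have hc3 : ¬ (n - i + j < n) := by omega
  have hc4 : n - i + j ≠ n := by omega
  simp [xvec, hc1, hc2, hc3, hc4] at this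
  norm_num at this

lemma xvec_ne_zero {n : ℕ} (hn : 1 ≤ n) (i : ℕ) (h1 : 1 ≤ i) : xvec n i ≠ 0 := by
  intro h
  have htlt : n - 1 < n := by omega
  have := congrArg (fun w => w ⟨n - 1, htlt⟩) h
  have hc1 : ¬ (n - 1 + i < n) := by omega
  by_cases h2 : n - 1 + i = n
  · simp [xvec, hc1, h2] at this
  · simp [xvec, hc1, h2] at this

theorem stmt3 {n : ℕ} (hn : 1 ≤ n) :
    (Sset n).ncard = n + 2 ∧ ¬ CoveredByParallelHyperplanes (Sset n) 2 := by
  classical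
  constructor
  · -- cardinality
    have hset : Sset n = ↑(insert (0 : EuclideanSpace ℝ (Fin n))
        ((Finset.Icc 1 (n+1)).image (xvec n))) := by
      ext y
      simp only [Sset, Set.mem_union, Set.mem_singleton_iff, Set.mem_setOf_eq,
        Finset.coe_insert, Set.mem_insert_iff, Finset.coe_image, Set.mem_image,
        Finset.mem_coe, Finset.mem_Icc]
      constructor
      · rintro (rfl | ⟨i, h1, h2, rfl⟩)
        · exact Or.inl rfl
        · exact Or.inr ⟨i, ⟨h1, h2⟩, rfl⟩
      · rintro (rfl | ⟨i, ⟨h1, h2⟩, rfl⟩)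
        · exact Or.inl rfl
        · exact Or.inr ⟨i, h1, h2, rfl⟩
    rw [hset, Set.ncard_coe_finset]
    rw [Finset.card_insert_of_notMem, Finset.card_image_of_injOn]
    · simp
    · intro i hi j hj hij
      simp only [Finset.mem_coe, Finset.mem_Icc] at hi hj
      rcases lt_trichotomy i j with h | h | h
      · exact absurd hij (xvec_ne i j hi.1 h hj.2)
      · exact h
      · exact absurd hij.symm (xvec_ne j i hj.1 h hi.2)
    · simp only [Finset.mem_image, Finset.mem_Icc, not_exists]
      rintro i ⟨⟨hi1, hi2⟩, h⟩
      exact xvec_ne_zero hn i hi1 h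
  · -- not coverable
    rintro ⟨v, hv, C, hC, hmem⟩
    have h0 : (0:ℝ) ∈ C := by
      have := hmem 0 (Or.inl rfl)
      simpa using this
    have hs : ∀ i, 1 ≤ i → i ≤ n+1 → ⟪v, xvec n i⟫ ∈ C := by
      intro i hi1 hi2
      exact hmem _ (Or.inr ⟨i, hi1, hi2, rfl⟩)
    have huniq : ∀ p ∈ C, ∀ q ∈ C, p ≠ 0 → q ≠ 0 → p = q := by
      intro p hp q hq hp0 hq0
      by_contra hne
      have hsub : ({0, p, q} : Finset ℝ) ⊆ C := by
        intro x hx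
        simp only [Finset.mem_insert, Finset.mem_singleton] at hx
        rcases hx with rfl | rfl | rfl <;> assumption
      have hcard : ({0, p, q} : Finset ℝ).card = 3 := by
        rw [Finset.card_insert_of_notMem (by simp [Ne.symm hp0, Ne.symm hq0]),
          Finset.card_insert_of_notMem (by simp [hne]), Finset.card_singleton]
      have := Finset.card_le_card hsub
      omega
    by_cases hall : ∀ i, 1 ≤ i → i ≤ n → ⟪v, xvec n i⟫ = 0
    · exact hv (vzero v hall)
    · push_neg at hall
      obtain ⟨i, h1, h2, ha⟩ := hall
      set a := ⟪v, xvec n i⟫ with hadef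
      have hsa : ∀ j, 1 ≤ j → j ≤ n+1 → ⟪v, xvec n j⟫ = 0 ∨ ⟪v, xvec n j⟫ = a := by
        intro j hj1 hj2
        by_cases h : ⟪v, xvec n j⟫ = 0
        · exact Or.inl h
        · exact Or.inr (huniq _ (hs j hj1 hj2) _ (hs i h1 (by omega)) h ha)
      set M : ℝ := ∑ k ∈ Finset.range n,
        (if ⟪v, xvec n (n-k)⟫ = 0 then 0 else (2:ℝ)^k) with hMdef
      have hMsum : ∑ k ∈ Finset.range n, (2:ℝ)^k * ⟪v, xvec n (n-k)⟫ = a * M := by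
        rw [hMdef, Finset.mul_sum]
        apply Finset.sum_congr rfl
        intro k hk
        simp only [Finset.mem_range] at hk
        by_cases h : ⟪v, xvec n (n-k)⟫ = 0
        · simp [h]
        · have heq : ⟪v, xvec n (n-k)⟫ = a :=
            ((hsa (n-k) (by omega) (by omega)).resolve_left h)
          rw [if_neg h, heq]
          ring
      have hMpos : 0 < M := by
        have hk0 : n - i ∈ Finset.range n := by simp; omega
        have hni : n - (n - i) = i := by omega
        have hle := Finset.single_le_sum
          (f := fun k => if ⟪v, xvec n (n-k)⟫ = 0 then (0:ℝ) else (2:ℝ)^k)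
          (fun k _ => by split <;> positivity) hk0
        have hterm0 : (if ⟪v, xvec n (n-(n-i))⟫ = 0 then (0:ℝ) else (2:ℝ)^(n-i))
            = (2:ℝ)^(n-i) := by
          rw [hni]; exact if_neg ha
        rw [hterm0] at hle
        rw [hMdef]
        calc (0:ℝ) < 2^(n-i) := by positivity
          _ ≤ _ := hle
      have hkey := keyid v
      rw [hMsum] at hkey
      rcases hsa (n+1) (by omega) le_rfl with h | h
      · rw [h, add_zero] at hkey
        rcases mul_eq_zero.mp hkey with h' | h'
        · exact ha h'
        · exact absurd h' hMpos.ne'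
      · rw [h] at hkey
        have : a * (M + 1) = 0 := by linarith
        rcases mul_eq_zero.mp this with h' | h'
        · exact ha h'
        · linarith
end

section
/- For any k distinct points x₁,...,x_k ∈ ℝⁿ there exists a line L in ℝⁿ such that the number m of distinct orthogonal projections of the points onto L satisfies m ≤ max{1, k-n+1}. -/
open scoped RealInnerProductSpace

theorem stmt6 {n k : ℕ} (hn : 1 ≤ n) (x : Fin k → EuclideanSpace ℝ (Fin n))
    (hx : Function.Injective x) :
    ∃ u : EuclideanSpace ℝ (Fin n), ‖u‖ = 1 ∧
      (Finset.image (fun i => ⟪u, x i⟫) Finset.univ).card ≤ max 1 (k - n + 1) := by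
  rcases Nat.eq_zero_or_pos k with hk | hk
  · subst hk
    refine ⟨EuclideanSpace.single ⟨0, hn⟩ 1, by simp [EuclideanSpace.norm_single], by simp⟩
  · set m := min k n with hm
    have hmk : m ≤ k := min_le_left _ _
    have hmn : m ≤ n := min_le_right _ _
    have hm1 : 1 ≤ m := le_min hk hn
    set x0 : Fin k := ⟨0, hk⟩
    set d : Fin (m - 1) → EuclideanSpace ℝ (Fin n) :=
      fun i => x ⟨i.val + 1, by omega⟩ - x x0 with hd
    set W : Submodule ℝ (EuclideanSpace ℝ (Fin n)) := Submodule.span ℝ (Set.range d) with hW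
    have hWrank : Module.finrank ℝ W ≤ m - 1 := by
      have := finrank_range_le_card (R := ℝ) d
      simpa [Set.finrank] using this
    have hWne : W ≠ ⊤ := by
      intro h
      have : Module.finrank ℝ W = n := by
        rw [h]; simpa using finrank_euclideanSpace (𝕜 := ℝ) (n := Fin n)
      omega
    have hbot : Wᗮ ≠ ⊥ := by
      intro h
      exact hWne (Submodule.orthogonal_eq_bot_iff.mp h)
    obtain ⟨v, hvW, hv0⟩ := Submodule.exists_mem_ne_zero_of_ne_bot hbot
    refine ⟨‖v‖⁻¹ • v, ?_, ?_⟩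
    · rw [norm_smul, norm_inv, norm_norm, inv_mul_cancel₀ (norm_ne_zero_iff.mpr hv0)]
    · set u : EuclideanSpace ℝ (Fin n) := ‖v‖⁻¹ • v with hu
      have hcollide : ∀ i : Fin k, i.val < n → ⟪u, x i⟫ = ⟪u, x x0⟫ := by
        intro i hi
        have hmem : x i - x x0 ∈ W := by
          rcases Nat.eq_zero_or_pos i.val with h0 | h0
          · have : i = x0 := Fin.ext h0
            rw [this]; simp
          · have him : i.val < m := by omega
            have hii : (⟨(i.val - 1) + 1, by omega⟩ : Fin k) = i := Fin.ext (by simp; omega)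
            have : x i - x x0 = d ⟨i.val - 1, by omega⟩ := by
              simp only [hd, hii]
            rw [this]
            exact Submodule.subset_span ⟨_, rfl⟩
        have : ⟪x i - x x0, v⟫ = 0 :=
          (Submodule.mem_orthogonal W v).mp hvW _ hmem
        have h2 : ⟪u, x i - x x0⟫ = 0 := by
          rw [hu, real_inner_smul_left, real_inner_comm, this, mul_zero]
        have := inner_sub_right (𝕜 := ℝ) u (x i) (x x0)
        rw [h2] at this
        linarith [this]
      have hsub : Finset.image (fun i => ⟪u, x i⟫) Finset.univ ⊆
          insert (⟪u, x x0⟫)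
            (Finset.image (fun j : Fin (k - n) => ⟪u, x ⟨n + j.val, by omega⟩⟫) Finset.univ) := by
        intro y hy
        simp only [Finset.mem_image, Finset.mem_univ, true_and] at hy
        obtain ⟨i, rfl⟩ := hy
        rcases lt_or_ge i.val n with hi | hi
        · exact Finset.mem_insert.mpr (Or.inl (hcollide i hi))
        · refine Finset.mem_insert.mpr (Or.inr ?_)
          simp only [Finset.mem_image, Finset.mem_univ, true_and]
          refine ⟨⟨i.val - n, by omega⟩, ?_⟩
          congr 1
          exact congrArg x (Fin.ext (by simp; omega))
      calc (Finset.image (fun i => ⟪u, x i⟫) Finset.univ).card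
          ≤ _ := Finset.card_le_card hsub
        _ ≤ (Finset.image (fun j : Fin (k - n) => ⟪u, x ⟨n + j.val, by omega⟩⟫) Finset.univ).card + 1 :=
            Finset.card_insert_le _ _
        _ ≤ (k - n) + 1 := by
            have := Finset.card_image_le (s := (Finset.univ : Finset (Fin (k - n))))
              (f := fun j : Fin (k - n) => ⟪u, x ⟨n + j.val, by omega⟩⟫)
            simpa using this
        _ ≤ max 1 (k - n + 1) := by omega
end

section
/- Let k > n and let x₁,...,x_{k-1} ∈ ℝⁿ be distinct nonzero vectors such that the set S = {0, x₁,...,x_{k-1}} cannot be covered by fewer than k-n+1 parallel hyperplanes. Then every n of the vectors x₁,...,x_{k-1} are linearly independent, i.e., the n×(k-1) matrix A with columns x₁,...,x_{k-1} has all n×n minors nonzero. -/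
open scoped RealInnerProductSpace

theorem stmt9 {n k : ℕ} (hn : 1 ≤ n) (hk : n < k)
    (x : Fin (k - 1) → EuclideanSpace ℝ (Fin n))
    (hinj : Function.Injective x) (hnz : ∀ i, x i ≠ 0)
    (hcover : ¬ CoveredByParallelHyperplanes ({0} ∪ Set.range x) (k - n)) :
    ∀ g : Fin n → Fin (k - 1), Function.Injective g →
      LinearIndependent ℝ (fun t => x (g t)) := by
  intro g hg
  by_contra hdep
  apply hcover
  set K : Submodule ℝ (EuclideanSpace ℝ (Fin n)) :=
    Submodule.span ℝ (Set.range (fun t => x (g t))) with hKdef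
  have hKlt : Module.finrank ℝ K < n := by
    have hle : Module.finrank ℝ K ≤ Fintype.card (Fin n) :=
      finrank_range_le_card _
    rcases lt_or_eq_of_le hle with h | h
    · simpa using h
    · exact absurd (linearIndependent_iff_card_eq_finrank_span.2 h.symm) hdep
  have horth : 0 < Module.finrank ℝ Kᗮ := by
    have := Submodule.finrank_add_finrank_orthogonal K
    have hfr : Module.finrank ℝ (EuclideanSpace ℝ (Fin n)) = n := by simp
    omega
  have hne : Kᗮ ≠ ⊥ := by
    intro h
    rw [h] at horth
    simp at horth
  obtain ⟨v, hvK, hv0⟩ := Submodule.exists_mem_ne_zero_of_ne_bot hne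
  refine ⟨v, hv0, insert 0 (Finset.image (fun i => ⟪v, x i⟫)
    (Finset.univ \ Finset.image g Finset.univ)), ?_, ?_⟩
  · have hcard : (Finset.univ \ Finset.image g Finset.univ : Finset (Fin (k-1))).card
        = (k - 1) - n := by
      rw [Finset.card_sdiff_of_subset (Finset.subset_univ _)]
      simp [Finset.card_image_of_injective _ hg]
    calc _ ≤ (Finset.image (fun i => ⟪v, x i⟫)
          (Finset.univ \ Finset.image g Finset.univ)).card + 1 := Finset.card_insert_le _ _
      _ ≤ ((k - 1) - n) + 1 := by
          gcongr
          exact (Finset.card_image_le).trans_eq hcard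
      _ ≤ k - n := by omega
  · rintro y (hy | ⟨i, rfl⟩)
    · simp at hy
      simp [hy]
    · by_cases hi : i ∈ Finset.image g Finset.univ
      · obtain ⟨t, _, rfl⟩ := Finset.mem_image.1 hi
        have hx : x (g t) ∈ K := Submodule.subset_span ⟨t, rfl⟩
        have : ⟪x (g t), v⟫ = 0 := hvK _ hx
        refine Finset.mem_insert.2 (Or.inl ?_)
        rw [real_inner_comm]
        exact this
      · exact Finset.mem_insert.2 (Or.inr (Finset.mem_image.2
          ⟨i, Finset.mem_sdiff.2 ⟨Finset.mem_univ _, hi⟩, rfl⟩))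
end

section
/- Let S = {x₁,...,x_k} ⊂ ℝⁿ with k > n. If for every partition S = I_m ⊔ J_l (m, l ≥ 1, m+l = k), every n vectors in the full difference set D(I_m,J_l) = {xᵢ - x_j : xᵢ ∈ I_m, x_j ∈ J_l} are linearly independent, then S cannot be covered by fewer than k-n+1 parallel hyperplanes. -/
open scoped RealInnerProductSpace

theorem stmt12 {n k : ℕ} (hn : 1 ≤ n) (hk : n < k)
    (x : Fin k → EuclideanSpace ℝ (Fin n)) (hinj : Function.Injective x)
    (hyp : ∀ I J : Finset (Fin k), Disjoint I J → I ∪ J = Finset.univ →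
      I.Nonempty → J.Nonempty →
      ∀ g : Fin n → EuclideanSpace ℝ (Fin n), Function.Injective g →
        (∀ t, ∃ i ∈ I, ∃ j ∈ J, g t = x i - x j) →
        LinearIndependent ℝ g) :
    ¬ CoveredByParallelHyperplanes (Set.range x) (k - n) := by
  classical
  rintro ⟨v, hv, C, hC, hmem⟩
  have hk1 : 0 < k := by omega
  set f : Fin k → ℝ := fun i => ⟪v, x i⟫ with hf
  have hfC : ∀ i, f i ∈ C := fun i => hmem (x i) ⟨i, rfl⟩
  have hne : ∀ i : Fin k, (Finset.univ.filter fun j => f j = f i).Nonempty :=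
    fun i => ⟨i, by simp⟩
  set r : Fin k → Fin k := fun i => (Finset.univ.filter fun j => f j = f i).min' (hne i) with hr
  have hfr : ∀ i, f (r i) = f i := by
    intro i
    have := Finset.min'_mem (Finset.univ.filter fun j => f j = f i) (hne i)
    simpa using this
  have hrcongr : ∀ i i', f i = f i' → r i = r i' := by
    intro i i' h
    have hset : (Finset.univ.filter fun j => f j = f i) =
        (Finset.univ.filter fun j => f j = f i') := by
      ext j; simp [h]
    simp only [hr]
    congr 1
  set J₀ : Finset (Fin k) := Finset.image r Finset.univ with hJ0
  set I₀ : Finset (Fin k) := J₀ᶜ with hI0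
  have hrJ : ∀ i, r i ∈ J₀ := fun i => Finset.mem_image_of_mem r (Finset.mem_univ i)
  have hIJne : ∀ i ∈ I₀, ∀ j ∈ J₀, i ≠ j := by
    intro i hi j hj h
    rw [hI0, Finset.mem_compl] at hi
    exact hi (h ▸ hj)
  have hJcard : J₀.card ≤ k - n := by
    have h1 : J₀.card ≤ (Finset.univ.image f).card := by
      apply Finset.card_le_card_of_injOn f
      · intro j _; exact Finset.mem_image_of_mem f (Finset.mem_univ j)
      · intro j hj j' hj' hff
        simp only [hJ0, Finset.coe_image, Set.mem_image, Finset.mem_coe] at hj hj'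
        obtain ⟨i, _, rfl⟩ := hj
        obtain ⟨i', _, rfl⟩ := hj'
        exact hrcongr i i' (by rw [← hfr i, ← hfr i', hff])
    have h2 : (Finset.univ.image f) ⊆ C := by
      intro c hc
      rw [Finset.mem_image] at hc
      obtain ⟨i, _, rfl⟩ := hc
      exact hfC i
    exact (h1.trans (Finset.card_le_card h2)).trans hC
  have hI0card : n ≤ I₀.card := by
    have := Finset.card_compl (α := Fin k) J₀
    have hJk : J₀.card ≤ k := (Finset.card_le_card (Finset.subset_univ _)).trans (by simp)
    rw [hI0]
    simp only [Finset.card_compl, Fintype.card_fin]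
    omega
  set d : Fin k → EuclideanSpace ℝ (Fin n) := fun i => x i - x (r i) with hd
  have hdker : ∀ i, ⟪v, d i⟫ = (0:ℝ) := by
    intro i
    rw [hd]
    simp only [inner_sub_right]
    have := hfr i
    rw [hf] at this
    simp only [this]
    ring
  set S : Finset (EuclideanSpace ℝ (Fin n)) := I₀.image d with hS
  -- common setup for applying hyp with a finset of difference vectors
  by_cases hScard : n ≤ S.card
  · -- Case 1: n distinct difference vectors, all in ker ⟪v,·⟫
    obtain ⟨F, hFS, hFcard⟩ := Finset.exists_subset_card_eq hScard
    set e := Finset.equivFinOfCardEq hFcard with he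
    set g : Fin n → EuclideanSpace ℝ (Fin n) := fun t => ((e.symm t : F) : EuclideanSpace ℝ (Fin n)) with hg
    have hginj : Function.Injective g :=
      Subtype.coe_injective.comp e.symm.injective
    have hgmem : ∀ t, (g t) ∈ F := fun t => (e.symm t).2
    have hgprop : ∀ t, ∃ i ∈ I₀, ∃ j ∈ J₀, g t = x i - x j := by
      intro t
      have := hFS (hgmem t)
      rw [hS, Finset.mem_image] at this
      obtain ⟨i, hi, hdi⟩ := this
      exact ⟨i, hi, r i, hrJ i, hdi.symm⟩
    have hI0ne : I₀.Nonempty := Finset.card_pos.mp (by omega)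
    have hJ0ne : J₀.Nonempty := ⟨r ⟨0, hk1⟩, hrJ _⟩
    have hdisj : Disjoint I₀ J₀ := by rw [hI0]; exact disjoint_compl_left
    have hunion : I₀ ∪ J₀ = Finset.univ := by rw [hI0, Finset.union_comm, Finset.union_compl]
    have li := hyp I₀ J₀ hdisj hunion hI0ne hJ0ne g hginj hgprop
    -- all g t in kernel of inner functional
    set φ : EuclideanSpace ℝ (Fin n) →ₗ[ℝ] ℝ :=
      ((innerSL ℝ v : EuclideanSpace ℝ (Fin n) →L[ℝ] ℝ) : EuclideanSpace ℝ (Fin n) →ₗ[ℝ] ℝ) with hφ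
    have hSker : ∀ w ∈ S, ⟪v, w⟫ = (0:ℝ) := by
      intro w hw
      rw [hS, Finset.mem_image] at hw
      obtain ⟨i, _, rfl⟩ := hw
      exact hdker i
    have hgker : ∀ t, g t ∈ LinearMap.ker φ := by
      intro t
      rw [LinearMap.mem_ker]
      have := hSker _ (hFS (hgmem t))
      simpa [hφ] using this
    set g' : Fin n → LinearMap.ker φ := fun t => ⟨g t, hgker t⟩ with hg'
    have li' : LinearIndependent ℝ g' := by
      apply LinearIndependent.of_comp (LinearMap.ker φ).subtype
      have : (LinearMap.ker φ).subtype ∘ g' = g := rfl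
      rw [this]; exact li
    have hcard := li'.fintype_card_le_finrank
    rw [Fintype.card_fin] at hcard
    have hrk : Module.finrank ℝ (LinearMap.range φ) + Module.finrank ℝ (LinearMap.ker φ)
        = Module.finrank ℝ (EuclideanSpace ℝ (Fin n)) := LinearMap.finrank_range_add_finrank_ker φ
    have hE : Module.finrank ℝ (EuclideanSpace ℝ (Fin n)) = n := by
      rw [finrank_euclideanSpace, Fintype.card_fin]
    have hrange0 : Module.finrank ℝ (LinearMap.range φ) ≠ 0 := by
      rw [Ne, Submodule.finrank_eq_zero, Submodule.eq_bot_iff]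
      intro h
      apply hv
      have hvk : φ v = 0 := h (φ v) ⟨v, rfl⟩
      have : ⟪v, v⟫ = (0:ℝ) := by simpa [hφ] using hvk
      exact inner_self_eq_zero.mp this
    have hrange1 : Module.finrank ℝ (LinearMap.range φ) ≤ 1 := by
      have := Submodule.finrank_le (LinearMap.range φ)
      simpa using this
    omega
  · -- Case 2: a collision among difference vectors
    push_neg at hScard
    have hcoll := Finset.exists_ne_map_eq_of_card_lt_of_maps_to
      (lt_of_lt_of_le hScard hI0card) (fun i hi => Finset.mem_image_of_mem d hi)
    obtain ⟨i, hi, i', hi', hii', heq⟩ := hcoll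
    have hfii' : f i ≠ f i' := by
      intro h
      apply hii'
      have hrr : r i = r i' := hrcongr i i' h
      have : x i = x i' := by
        have := heq
        rw [hd] at this
        simp only [hrr] at this
        exact sub_left_injective this
      exact hinj this
    set j := r i with hjdef
    set j' := r i' with hj'def
    set a : EuclideanSpace ℝ (Fin n) := x i - x j with hadef
    have ha' : x i' - x j' = a := heq.symm
    have hij : i ≠ j := hIJne i hi j (hrJ i)
    have hij' : i ≠ j' := hIJne i hi j' (hrJ i')
    have hi'j : i' ≠ j := hIJne i' hi' j (hrJ i)
    have hi'j' : i' ≠ j' := hIJne i' hi' j' (hrJ i')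
    have hjj' : j ≠ j' := by
      intro h
      exact hfii' (by rw [← hfr i, ← hfr i', ← hjdef, ← hj'def, h])
    have ha0 : a ≠ 0 := by
      rw [hadef, sub_ne_zero]
      exact fun h => hij (hinj h)
    have hanega : a ≠ -a := by
      intro h
      apply ha0
      have : a + a = 0 := by nth_rewrite 2 [h]; simp
      have h2 : (2:ℝ) • a = 0 := by rw [two_smul]; exact this
      simpa using (smul_eq_zero.mp h2).resolve_left (by norm_num)
    set I : Finset (Fin k) := {i, j'} with hIdef
    set J : Finset (Fin k) := Iᶜ with hJdef
    have hiI : i ∈ I := by simp [hIdef]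
    have hj'I : j' ∈ I := by simp [hIdef]
    have hjJ : j ∈ J := by
      rw [hJdef, Finset.mem_compl, hIdef]
      simp [hij.symm, hjj', hjj'.symm]
    have hi'J : i' ∈ J := by
      rw [hJdef, Finset.mem_compl, hIdef]
      simp [hii'.symm, hi'j']
    have hn2 : 2 ≤ n := by
      have hSpos : 0 < S.card := by
        rw [hS, Finset.card_pos]
        exact ⟨d i, Finset.mem_image_of_mem d hi⟩
      omega
    have hk2 : n + 2 ≤ k := by
      have h2J : 2 ≤ J₀.card := by
        have : ({j, j'} : Finset (Fin k)) ⊆ J₀ := by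
          intro z hz
          rw [Finset.mem_insert, Finset.mem_singleton] at hz
          rcases hz with rfl | rfl
          exacts [hrJ i, hrJ i']
        calc 2 = ({j, j'} : Finset (Fin k)).card := (Finset.card_pair hjj').symm
          _ ≤ J₀.card := Finset.card_le_card this
      have hIc : I₀.card = k - J₀.card := by
        rw [hI0, Finset.card_compl, Fintype.card_fin]
      have hJk : J₀.card ≤ k := by
        have := Finset.card_le_card (Finset.subset_univ J₀)
        simpa using this
      omega
    have hJcard2 : n ≤ J.card := by
      rw [hJdef, Finset.card_compl, Fintype.card_fin, hIdef, Finset.card_pair hij']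
      omega
    set T : Finset (EuclideanSpace ℝ (Fin n)) := J.image (fun z => x i - x z) with hT
    have hTcard : T.card = J.card := by
      rw [hT]
      apply Finset.card_image_of_injOn
      intro z _ z' _ h
      exact hinj (sub_right_injective h)
    have haT : a ∈ T := by
      rw [hT, Finset.mem_image]
      exact ⟨j, hjJ, rfl⟩
    have hsub : ({a, -a} : Finset (EuclideanSpace ℝ (Fin n))) ⊆ insert (-a) T := by
      intro w hw
      rw [Finset.mem_insert, Finset.mem_singleton] at hw
      rcases hw with rfl | rfl
      · exact Finset.mem_insert_of_mem haT
      · exact Finset.mem_insert_self _ _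
    have hpaircard : ({a, -a} : Finset (EuclideanSpace ℝ (Fin n))).card = 2 :=
      Finset.card_pair hanega
    obtain ⟨F, hFsub, hFsup, hFcard⟩ := Finset.exists_subsuperset_card_eq (n := n - 2 + ({a, -a} : Finset (EuclideanSpace ℝ (Fin n))).card) hsub (Nat.le_add_left _ _)
      (by rw [hpaircard]; have : n ≤ (insert (-a) T).card := le_trans (hTcard ▸ hJcard2) (Finset.card_le_card (Finset.subset_insert _ _)); omega)
    rw [hpaircard] at hFcard
    have hFn : F.card = n := by omega
    set e := Finset.equivFinOfCardEq hFn with he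
    set g : Fin n → EuclideanSpace ℝ (Fin n) := fun t => ((e.symm t : F) : EuclideanSpace ℝ (Fin n)) with hg
    have hginj : Function.Injective g := Subtype.coe_injective.comp e.symm.injective
    have hgmem : ∀ t, (g t) ∈ F := fun t => (e.symm t).2
    have hgprop : ∀ t, ∃ p ∈ I, ∃ q ∈ J, g t = x p - x q := by
      intro t
      have := hFsup (hgmem t)
      rw [Finset.mem_insert] at this
      rcases this with h | h
      · refine ⟨j', hj'I, i', hi'J, ?_⟩
        rw [h, ← ha']
        abel
      · rw [hT, Finset.mem_image] at h
        obtain ⟨z, hz, hzz⟩ := h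
        exact ⟨i, hiI, z, hz, hzz.symm⟩
    have hdisj : Disjoint I J := by rw [hJdef]; exact disjoint_compl_right
    have hunion : I ∪ J = Finset.univ := by rw [hJdef]; simp
    have li := hyp I J hdisj hunion ⟨i, hiI⟩ ⟨j, hjJ⟩ g hginj hgprop
    -- contradiction: g hits both a and -a
    set t₀ := e ⟨a, hFsub (by simp)⟩ with ht₀
    set t₁ := e ⟨-a, hFsub (by simp)⟩ with ht₁
    have hgt₀ : g t₀ = a := by rw [hg, ht₀]; simp
    have hgt₁ : g t₁ = -a := by rw [hg, ht₁]; simp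
    have ht01 : t₀ ≠ t₁ := by
      intro h
      have hgg : g t₀ = g t₁ := congrArg g h
      rw [hgt₀, hgt₁] at hgg
      exact hanega hgg
    set c : Fin n → ℝ := fun t => if t = t₀ then 1 else if t = t₁ then 1 else 0 with hc
    rw [Fintype.linearIndependent_iff] at li
    have hsum : ∑ t, c t • g t = 0 := by
      have hstep : ∑ t, c t • g t = ∑ t ∈ ({t₀, t₁} : Finset (Fin n)), c t • g t := by
        symm
        apply Finset.sum_subset (Finset.subset_univ _)
        intro t _ ht
        rw [Finset.mem_insert, Finset.mem_singleton] at ht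
        push_neg at ht
        rw [hc]
        simp [ht.1, ht.2]
      rw [hstep, Finset.sum_pair ht01]
      simp only [hc]
      simp [ht01, ht01.symm, hgt₀, hgt₁]
    have := li c hsum t₀
    rw [hc] at this
    simp at this
end

section
/- Fix 1 ≤ ℓ ≤ n-1 and assume there exists a set S of n+2 points in {0,±1}ⁿ that cannot be covered by two parallel hyperplanes, together with a bipartite graph on S with girth greater than ℓ and at least ((n+2)/2)^{1+2/(3ℓ-2)} edges. Then there exists an n×d integer matrix A with all entries in {-2,...,2}, d ≥ ((n+2)/2)^{1+2/(3ℓ-2)}, such that any ℓ columns of A are linearly independent. -/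
open scoped RealInnerProductSpace
open Finset

lemma aux_step {V : Type*} (H : SimpleGraph V) {v u : V} (hr : H.Reachable v u) (hne : u ≠ v) :
    ∃ w, H.Adj u w ∧ H.Reachable v w ∧ H.dist v w < H.dist v u := by
  obtain ⟨p, hp⟩ := hr.symm.exists_walk_length_eq_dist
  cases p with
  | nil => exact absurd rfl hne
  | @cons _ w _ h q =>
      have hwv : H.Reachable v w := SimpleGraph.Reachable.symm (Nonempty.intro q)
      refine ⟨w, h, hwv, ?_⟩
      have h1 : H.dist v w ≤ q.length := by
        rw [SimpleGraph.dist_comm]; exact SimpleGraph.dist_le q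
      have h2 : H.dist v u = q.length + 1 := by
        rw [SimpleGraph.dist_comm, ← hp, SimpleGraph.Walk.length_cons]
      omega

lemma aux_reach_card {V : Type*} [DecidableEq V] (H : SimpleGraph V)
    (E : Finset (Sym2 V)) (hE : ∀ x y : V, H.Adj x y → s(x, y) ∈ E) (v : V)
    (U : Finset V) (hU : ∀ u, u ∈ U ↔ H.Reachable v u)
    (F : Finset (Sym2 V)) (hF : ∀ e, e ∈ E → (∀ x ∈ e, H.Reachable v x) → e ∈ F) :
    (U.erase v).card ≤ F.card := by
  classical
  have key : ∀ u : V, ∃ w, (H.Reachable v u ∧ u ≠ v) →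
      (H.Adj u w ∧ H.Reachable v w ∧ H.dist v w < H.dist v u) := by
    intro u
    by_cases h : H.Reachable v u ∧ u ≠ v
    · obtain ⟨w, hw⟩ := aux_step H h.1 h.2; exact ⟨w, fun _ => hw⟩
    · exact ⟨v, fun h' => absurd h' h⟩
  choose w hw using key
  refine Finset.card_le_card_of_injOn (fun u => s(u, w u)) ?_ ?_
  · intro u hu
    rw [mem_coe, mem_erase, hU] at hu
    obtain ⟨ha, hr, _⟩ := hw u ⟨hu.2, hu.1⟩
    refine hF _ (hE _ _ ha) ?_
    intro x hx
    rw [Sym2.mem_iff] at hx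
    rcases hx with rfl | rfl
    · exact hu.2
    · exact hr
  · intro u1 h1 u2 h2 heq
    simp only [coe_erase, Set.mem_diff, mem_coe, Set.mem_singleton_iff, hU] at h1 h2
    obtain ⟨ha1, hr1, hd1⟩ := hw u1 ⟨h1.1, h1.2⟩
    obtain ⟨ha2, hr2, hd2⟩ := hw u2 ⟨h2.1, h2.2⟩
    rw [Sym2.eq_iff] at heq
    rcases heq with ⟨h, _⟩ | ⟨hA, hB⟩
    · exact h
    · exfalso
      rw [← hA] at hd2
      rw [hB] at hd1
      omega

theorem stmt19 {n ℓ : ℕ} (hℓ : 1 ≤ ℓ) (hℓn : ℓ ≤ n - 1)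
    -- a set `S` of `n+2` points with coordinates in `{0, ±1}` ...
    (x : Fin (n + 2) → EuclideanSpace ℝ (Fin n)) (hinj : Function.Injective x)
    (hcoords : ∀ i t, x i t = 0 ∨ x i t = 1 ∨ x i t = -1)
    -- ... not coverable by two parallel hyperplanes ...
    (hcover : ¬ CoveredByParallelHyperplanes (Set.range x) 2)
    -- ... together with a bipartite graph on `S` ...
    (G : SimpleGraph (Fin (n + 2))) [DecidableRel G.Adj]
    (I J : Finset (Fin (n + 2))) (hIJ : Disjoint I J) (hunion : I ∪ J = Finset.univ)
    (hbip : ∀ a b, G.Adj a b → (a ∈ I ∧ b ∈ J) ∨ (a ∈ J ∧ b ∈ I))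
    -- ... with girth greater than `ℓ` and many edges.
    (hgirth : (ℓ : ℕ∞) < G.girth)
    (hedges : ((n + 2 : ℝ) / 2) ^ ((1 : ℝ) + 2 / (3 * (ℓ : ℝ) - 2)) ≤ G.edgeFinset.card) :
    ∃ d : ℕ, ((n + 2 : ℝ) / 2) ^ ((1 : ℝ) + 2 / (3 * (ℓ : ℝ) - 2)) ≤ (d : ℝ) ∧
      ∃ A : Matrix (Fin n) (Fin d) ℝ,
        (∀ i j, ∃ m : ℤ, A i j = (m : ℝ) ∧ |A i j| ≤ 2) ∧
        ∀ g : Fin ℓ → Fin d, Function.Injective g →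
          LinearIndependent ℝ (fun t => (fun i => A i (g t))) := by
  classical
  have hn2 : 2 ≤ n := by omega
  -- the ℓ < egirth fact
  have hegirth : (ℓ : ℕ∞) < G.egirth := by
    by_cases hac : G.IsAcyclic
    · rw [SimpleGraph.egirth_eq_top.mpr hac]
      exact lt_top_iff_ne_top.mpr (ENat.coe_ne_top _)
    · have : G.egirth = (G.girth : ℕ∞) :=
        (ENat.coe_toNat (by rwa [ne_eq, SimpleGraph.egirth_eq_top])).symm
      rw [this]; exact hgirth
  set d := G.edgeFinset.card with hd
  refine ⟨d, hedges, ?_⟩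
  -- enumeration of the edges with endpoints
  have hgen : ∀ j : Fin d, ∃ p : Fin (n+2) × Fin (n+2),
      G.Adj p.1 p.2 ∧ s(p.1, p.2) = (G.edgeFinset.equivFin.symm j : Sym2 (Fin (n+2))) := by
    intro j
    obtain ⟨e, he⟩ := G.edgeFinset.equivFin.symm j
    simp only
    rw [SimpleGraph.mem_edgeFinset] at he
    induction e with
    | _ p q => exact ⟨(p, q), he, rfl⟩
  choose ab hab hs using hgen
  set a' : Fin d → Fin (n+2) := fun j => (ab j).1 with ha'
  set b' : Fin d → Fin (n+2) := fun j => (ab j).2 with hb'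
  -- the points: 0, e_1, ..., e_n, (1,...,1)
  set Y : Fin (n+2) → Fin n → ℝ :=
    fun v i => if (v : ℕ) = n+1 ∨ (v : ℕ) = (i : ℕ)+1 then 1 else 0 with hY
  refine ⟨fun i j => Y (a' j) i - Y (b' j) i, ?_, ?_⟩
  · -- integrality and boundedness of entries
    intro i j
    refine ⟨(if (((a' j) : ℕ) = n+1 ∨ ((a' j) : ℕ) = (i : ℕ)+1) then 1 else 0)
      - (if (((b' j) : ℕ) = n+1 ∨ ((b' j) : ℕ) = (i : ℕ)+1) then 1 else 0), ?_, ?_⟩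
    · simp only [hY]; split_ifs <;> norm_num
    · simp only [hY]; split_ifs <;> norm_num
  · -- ℓ-wise linear independence
    intro g hg
    rw [Fintype.linearIndependent_iff]
    intro c hcdep
    set a : Fin ℓ → Fin (n+2) := fun t => a' (g t) with hadef
    set b : Fin ℓ → Fin (n+2) := fun t => b' (g t) with hbdef
    have hadj : ∀ t, G.Adj (a t) (b t) := fun t => hab (g t)
    have hedge : ∀ t s : Fin ℓ, s(a t, b t) = s(a s, b s) → t = s := by
      intro t s h
      apply hg
      apply G.edgeFinset.equivFin.symm.injective
      apply Subtype.ext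
      rw [← hs (g t), ← hs (g s)]
      exact h
    -- the vertex weight function
    set z : Fin (n+2) → ℝ := fun u =>
      ∑ t, c t * ((if a t = u then (1:ℝ) else 0) - (if b t = u then (1:ℝ) else 0)) with hz
    -- special vertices
    set u1 : Fin n → Fin (n+2) := fun i => ⟨(i : ℕ) + 1, by omega⟩ with hu1
    set u2 : Fin (n+2) := ⟨n+1, by omega⟩ with hu2
    have hYsplit : ∀ (v : Fin (n+2)) (i : Fin n),
        Y v i = (if v = u1 i then (1:ℝ) else 0) + (if v = u2 then (1:ℝ) else 0) := by
      intro v i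
      have hi : (i : ℕ) < n := i.isLt
      by_cases h1 : (v : ℕ) = (i : ℕ) + 1 <;> by_cases h2 : (v : ℕ) = n + 1
      · exfalso; omega
      · simp [hY, hu1, hu2, Fin.ext_iff, h1, h2]; omega
      · simp [hY, hu1, hu2, Fin.ext_iff, h1, h2]; omega
      · simp [hY, hu1, hu2, Fin.ext_iff, h1, h2]
    -- coordinates of the dependency
    have hco : ∀ i : Fin n, ∑ t, c t * (Y (a t) i - Y (b t) i) = 0 := by
      intro i
      have := congrFun hcdep i
      simpa [Finset.sum_apply] using this
    have Z1 : ∀ i : Fin n, z (u1 i) + z u2 = 0 := by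
      intro i
      rw [← hco i]
      simp only [hz]
      rw [← Finset.sum_add_distrib]
      refine Finset.sum_congr rfl fun t _ => ?_
      rw [hYsplit (a t) i, hYsplit (b t) i]
      ring
    have Z2 : ∑ u, z u = 0 := by
      simp only [hz]
      rw [Finset.sum_comm]
      refine Finset.sum_eq_zero fun t _ => ?_
      rw [← Finset.mul_sum]
      rw [Finset.sum_sub_distrib]
      simp [Finset.sum_ite_eq]
    set β : ℝ := z u2 with hβ
    have hmid : ∀ u : Fin (n+2), (u : ℕ) ≠ 0 → (u : ℕ) ≠ n+1 → z u = -β := by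
      intro u h0 hn1
      have hi : (u : ℕ) - 1 < n := by have := u.isLt; omega
      have : u = u1 ⟨(u : ℕ) - 1, hi⟩ := by
        rw [hu1]; apply Fin.ext; simp; omega
      rw [this]
      have := Z1 ⟨(u : ℕ) - 1, hi⟩
      linarith
    -- the cut lemma
    have hcut : ∀ U : Finset (Fin (n+2)), ∑ u ∈ U, z u =
        ∑ t, c t * ((if a t ∈ U then (1:ℝ) else 0) - (if b t ∈ U then (1:ℝ) else 0)) := by
      intro U
      simp only [hz]
      rw [Finset.sum_comm]
      refine Finset.sum_congr rfl fun t _ => ?_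
      rw [← Finset.mul_sum, Finset.sum_sub_distrib]
      congr 2 <;> simp [Finset.sum_ite_eq]
    -- the edge finset
    set E : Finset (Sym2 (Fin (n+2))) :=
      (univ.filter (fun t => c t ≠ 0)).image (fun t => s(a t, b t)) with hE
    have hEcard : E.card ≤ ℓ := by
      refine le_trans Finset.card_image_le (le_trans (Finset.card_filter_le _ _) ?_)
      simp
    have hEG : ∀ e ∈ E, e ∈ G.edgeSet := by
      intro e he
      rw [hE, Finset.mem_image] at he
      obtain ⟨t, -, rfl⟩ := he
      exact hadj t
    set H : SimpleGraph (Fin (n+2)) := SimpleGraph.fromEdgeSet (E : Set (Sym2 (Fin (n+2)))) with hH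
    have hHadj : ∀ t, c t ≠ 0 → H.Adj (a t) (b t) := by
      intro t ht
      rw [hH, SimpleGraph.fromEdgeSet_adj]
      exact ⟨by rw [hE]; exact Finset.mem_image_of_mem _ (by simp [ht]), (hadj t).ne⟩
    have hHE : ∀ p q : Fin (n+2), H.Adj p q → s(p, q) ∈ E := by
      intro p q h
      rw [hH, SimpleGraph.fromEdgeSet_adj] at h
      exact h.1
    -- Now prove all coefficients vanish
    by_cases hβ0 : β = 0
    · -- acyclic case: z vanishes identically, use girth to kill each coefficient
      have hz1 : ∀ u : Fin (n+2), (u : ℕ) ≠ 0 → z u = 0 := by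
        intro u h0
        by_cases hn1 : (u : ℕ) = n+1
        · have hueq : u = u2 := Fin.ext (by simpa [hu2] using hn1)
          rw [hueq, ← hβ, hβ0]
        · rw [hmid u h0 hn1, hβ0]; ring
      have hz0 : ∀ u, z u = 0 := by
        intro u
        by_cases h0 : (u : ℕ) = 0
        · have hueq : u = ⟨0, by omega⟩ := Fin.ext h0
          have h := Z2
          rw [Finset.sum_eq_single_of_mem (⟨0, by omega⟩ : Fin (n+2)) (mem_univ _)
            (fun b _ hb => hz1 b (fun hc => hb (Fin.ext (by simpa using hc))))] at h
          rw [hueq]; exact h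
        · exact hz1 u h0
      intro t0
      by_contra hc0
      set e : Sym2 (Fin (n+2)) := s(a t0, b t0) with he
      have heE : e ∈ E := by
        rw [hE, he]; exact Finset.mem_image_of_mem _ (by simp [hc0])
      set E' : Finset (Sym2 (Fin (n+2))) := E.erase e with hE'
      set H' := SimpleGraph.fromEdgeSet (E' : Set (Sym2 (Fin (n+2)))) with hH'
      have hH'adj : ∀ t, c t ≠ 0 → t ≠ t0 → H'.Adj (a t) (b t) := by
        intro t ht htne
        rw [hH', SimpleGraph.fromEdgeSet_adj]
        refine ⟨Finset.mem_coe.mpr (Finset.mem_erase.mpr ⟨?_, ?_⟩), (hadj t).ne⟩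
        · rw [he]; exact fun hcon => htne (hedge t t0 hcon)
        · rw [hE]; exact Finset.mem_image_of_mem _ (by simp [ht])
      have hnreach : ¬ H'.Reachable (a t0) (b t0) := by
        rintro ⟨p⟩
        set q := p.bypass with hq
        have hqp : q.IsPath := p.bypass_isPath
        have hqe : ∀ e' ∈ q.edges, e' ∈ E' := by
          intro e' he'
          have hmem : e' ∈ H'.edgeSet := q.edges_subset_edgeSet he'
          rw [hH', SimpleGraph.edgeSet_fromEdgeSet] at hmem
          exact Finset.mem_coe.mp hmem.1
        have hqG : ∀ e' ∈ q.edges, e' ∈ G.edgeSet := by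
          intro e' he'
          exact hEG e' (Finset.mem_of_mem_erase (hqe e' he'))
        set q' := q.transfer G hqG with hq'
        have hq'path : q'.IsPath := hqp.transfer hqG
        have hcyc : (SimpleGraph.Walk.cons (hadj t0).symm q').IsCycle := by
          rw [SimpleGraph.Walk.cons_isCycle_iff]
          refine ⟨hq'path, ?_⟩
          rw [hq', SimpleGraph.Walk.edges_transfer]
          intro hmem
          have hcon : s(b t0, a t0) ∈ E' := hqe _ hmem
          rw [hE'] at hcon
          exact (Finset.ne_of_mem_erase hcon) (by rw [he, Sym2.eq_swap])
        have hlen : q.length + 1 ≤ ℓ := by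
          have hnd : q.edges.Nodup := hqp.isTrail.edges_nodup
          have h1 : q.edges.toFinset ⊆ E' := fun e' he' => hqe e' (List.mem_toFinset.mp he')
          have h2 : q.edges.toFinset.card = q.edges.length := List.toFinset_card_of_nodup hnd
          have h3 : E'.card + 1 ≤ ℓ := by
            rw [hE', Finset.card_erase_of_mem heE]
            have hpos : 0 < E.card := Finset.card_pos.mpr ⟨e, heE⟩
            omega
          have h4 : q.edges.toFinset.card ≤ E'.card := Finset.card_le_card h1
          have h5 : q.edges.length = q.length := q.length_edges
          omega
        have hge : G.egirth ≤ ((SimpleGraph.Walk.cons (hadj t0).symm q').length : ℕ∞) := by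
          rw [SimpleGraph.egirth]
          exact iInf_le_of_le _ (iInf_le_of_le _ (iInf_le _ hcyc))
        have hlencyc : ((SimpleGraph.Walk.cons (hadj t0).symm q').length : ℕ∞) ≤ (ℓ : ℕ∞) := by
          rw [SimpleGraph.Walk.length_cons, SimpleGraph.Walk.length_transfer]
          exact_mod_cast hlen
        exact absurd (lt_of_lt_of_le hegirth (le_trans hge hlencyc)) (lt_irrefl _)
      set U : Finset (Fin (n+2)) := univ.filter (fun u => H'.Reachable (a t0) u) with hU
      have hside : ∀ t ∈ (univ : Finset (Fin ℓ)), t ≠ t0 →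
          c t * ((if a t ∈ U then (1:ℝ) else 0) - (if b t ∈ U then (1:ℝ) else 0)) = 0 := by
        intro t _ htne
        by_cases ht : c t = 0
        · rw [ht]; ring
        · have hiff : (a t ∈ U) ↔ (b t ∈ U) := by
            rw [hU]; simp only [mem_filter, mem_univ, true_and]
            exact ⟨fun hr => hr.trans (hH'adj t ht htne).reachable,
                   fun hr => hr.trans (hH'adj t ht htne).symm.reachable⟩
          by_cases hA : a t ∈ U
          · rw [if_pos hA, if_pos (hiff.mp hA)]; ring
          · rw [if_neg hA, if_neg (fun hB => hA (hiff.mpr hB))]; ring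
      have hsingle := Finset.sum_eq_single_of_mem t0 (mem_univ t0) hside
      have h0 : (0:ℝ) = c t0 * ((if a t0 ∈ U then (1:ℝ) else 0) - (if b t0 ∈ U then (1:ℝ) else 0)) := by
        rw [← hsingle, ← hcut U]
        exact (Finset.sum_eq_zero fun u _ => hz0 u).symm
      have haU : a t0 ∈ U := by
        rw [hU, mem_filter]; exact ⟨mem_univ _, SimpleGraph.Reachable.refl _⟩
      have hbU : b t0 ∉ U := by
        rw [hU, mem_filter]; exact fun hcon => hnreach hcon.2
      rw [if_pos haU, if_neg hbU] at h0
      exact absurd (by linarith : c t0 = 0) hc0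
    · -- β ≠ 0 : impossible by the counting argument
      exfalso
      have hcover' : ∀ u : Fin (n+2), H.Reachable 0 u ∨ H.Reachable u2 u := by
        intro u
        by_contra hcon
        push_neg at hcon
        set Uu : Finset (Fin (n+2)) := univ.filter (fun w => H.Reachable u w) with hUu
        have hrhs : ∑ t, c t * ((if a t ∈ Uu then (1:ℝ) else 0) - (if b t ∈ Uu then (1:ℝ) else 0)) = 0 := by
          refine Finset.sum_eq_zero fun t _ => ?_
          by_cases ht : c t = 0
          · rw [ht]; ring
          · have hiff : (a t ∈ Uu) ↔ (b t ∈ Uu) := by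
              simp only [hUu, mem_filter, mem_univ, true_and]
              exact ⟨fun hr => hr.trans (hHadj t ht).reachable,
                     fun hr => hr.trans (hHadj t ht).symm.reachable⟩
            by_cases hA : a t ∈ Uu
            · rw [if_pos hA, if_pos (hiff.mp hA)]; ring
            · rw [if_neg hA, if_neg (fun hB => hA (hiff.mpr hB))]; ring
        have hsum := hcut Uu
        rw [hrhs] at hsum
        have hall : ∀ w ∈ Uu, z w = -β := by
          intro w hw
          rw [hUu, mem_filter] at hw
          refine hmid w ?_ ?_
          · intro h0v
            apply hcon.1
            have hw0 : w = 0 := Fin.ext (by simpa using h0v)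
            rw [hw0] at hw
            exact hw.2.symm
          · intro hval
            apply hcon.2
            have hwu2 : w = u2 := Fin.ext (by simpa [hu2] using hval)
            rw [hwu2] at hw
            exact hw.2.symm
        rw [Finset.sum_congr rfl hall, Finset.sum_const] at hsum
        have huU : u ∈ Uu := by
          rw [hUu, mem_filter]; exact ⟨mem_univ _, SimpleGraph.Reachable.refl _⟩
        have hcardpos : 0 < Uu.card := Finset.card_pos.mpr ⟨u, huU⟩
        have hzero : (Uu.card : ℝ) * (-β) = 0 := by
          simpa [nsmul_eq_mul] using hsum
        rcases mul_eq_zero.mp hzero with h | h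
        · have : Uu.card = 0 := by exact_mod_cast h
          omega
        · exact hβ0 (by linarith)
      set U0 : Finset (Fin (n+2)) := univ.filter (fun u => H.Reachable 0 u) with hU0
      set U1 : Finset (Fin (n+2)) := univ.filter (fun u => H.Reachable u2 u) with hU1
      set F0 : Finset (Sym2 (Fin (n+2))) := E.filter (fun e => ∀ x ∈ e, H.Reachable 0 x) with hF0
      set F1 : Finset (Sym2 (Fin (n+2))) := E.filter (fun e => ∀ x ∈ e, H.Reachable u2 x) with hF1
      have hb0 : (U0.erase 0).card ≤ F0.card :=
        aux_reach_card H E hHE 0 U0 (fun u => by rw [hU0, mem_filter]; simp) F0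
          (fun e heE hr => by rw [hF0, mem_filter]; exact ⟨heE, hr⟩)
      have hb1 : (U1.erase u2).card ≤ F1.card :=
        aux_reach_card H E hHE u2 U1 (fun u => by rw [hU1, mem_filter]; simp) F1
          (fun e heE hr => by rw [hF1, mem_filter]; exact ⟨heE, hr⟩)
      have h0U0 : (0 : Fin (n+2)) ∈ U0 := by
        rw [hU0, mem_filter]; exact ⟨mem_univ _, SimpleGraph.Reachable.refl _⟩
      have hu2U1 : u2 ∈ U1 := by
        rw [hU1, mem_filter]; exact ⟨mem_univ _, SimpleGraph.Reachable.refl _⟩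
      have hF0card : F0.card ≤ ℓ := le_trans (Finset.card_filter_le _ _) hEcard
      by_cases hRe : H.Reachable 0 u2
      · have hU0univ : U0 = univ := by
          rw [hU0]
          apply Finset.eq_univ_iff_forall.mpr
          intro u
          rw [mem_filter]
          refine ⟨mem_univ _, ?_⟩
          rcases hcover' u with h | h
          · exact h
          · exact hRe.trans h
        have h1 : (U0.erase 0).card = n + 1 := by
          rw [Finset.card_erase_of_mem h0U0, hU0univ]
          simp
        omega
      · have hdisjU : Disjoint U0 U1 := by
          rw [Finset.disjoint_left]
          intro u hu0 hu1
          rw [hU0, mem_filter] at hu0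
          rw [hU1, mem_filter] at hu1
          exact hRe (hu0.2.trans hu1.2.symm)
        have hunionU : U0 ∪ U1 = univ := by
          apply Finset.eq_univ_iff_forall.mpr
          intro u
          rw [Finset.mem_union, hU0, hU1, mem_filter, mem_filter]
          rcases hcover' u with h | h
          · exact Or.inl ⟨mem_univ _, h⟩
          · exact Or.inr ⟨mem_univ _, h⟩
        have hdisjF : Disjoint F0 F1 := by
          rw [Finset.disjoint_left]
          intro e he0 he1
          rw [hF0, mem_filter] at he0
          rw [hF1, mem_filter] at he1
          exact hRe ((he0.2 _ (Sym2.out_fst_mem e)).trans (he1.2 _ (Sym2.out_fst_mem e)).symm)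
        have hcardsum : U0.card + U1.card = n + 2 := by
          rw [← Finset.card_union_of_disjoint hdisjU, hunionU]
          simp
        have hFsum : F0.card + F1.card ≤ ℓ := by
          rw [← Finset.card_union_of_disjoint hdisjF]
          exact le_trans (Finset.card_le_card
            (Finset.union_subset (Finset.filter_subset _ _) (Finset.filter_subset _ _))) hEcard
        have e0 : (U0.erase 0).card = U0.card - 1 := Finset.card_erase_of_mem h0U0
        have e1 : (U1.erase u2).card = U1.card - 1 := Finset.card_erase_of_mem hu2U1
        have hp0 : 0 < U0.card := Finset.card_pos.mpr ⟨_, h0U0⟩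
        have hp1 : 0 < U1.card := Finset.card_pos.mpr ⟨_, hu2U1⟩
        omega
end
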